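/- Forced-edge reduction for stable flows: let (D,c,O) be a stable flow instance with a completely forced edge uv (required f(uv) = c(uv)). Form D_st by deleting uv and adding new terminal vertices s, t with edges sv and ut of capacity c(uv), where sv takes uv's rank in v's list and ut takes uv's rank in u's list. Then D admits a stable flow f with f(uv) = c(uv) if and only if D_st admits a stable flow f_st with f_st(sv) = f_st(ut) = c(uv). -/

import Mathlib

/-- A flow network: directed edges `E` over vertices `V`, capacities, a set `S`
of terminals, and for each vertex a rank of its incident edges
(lower rank = more preferred). -/
structure FlowNet (V E : Type) where
  src : E → V
  dst : E → V
  cap : E → ℚ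
  S : Set V
  rk : V → E → ℚ

variable {V E : Type}

/-- Total flow leaving `v`. -/
def outflow [Fintype E] [DecidableEq V] (N : FlowNet V E) (f : E → ℚ) (v : V) : ℚ :=
  ∑ e : E, if N.src e = v then f e else 0

/-- Total flow entering `v`. -/
def inflow [Fintype E] [DecidableEq V] (N : FlowNet V E) (f : E → ℚ) (v : V) : ℚ :=
  ∑ e : E, if N.dst e = v then f e else 0

/-- Feasible flow: capacity constraints, and conservation at non-terminals. -/
def Feasible [Fintype E] [DecidableEq V] (N : FlowNet V E) (f : E → ℚ) : Prop :=
  (∀ e, 0 ≤ f e ∧ f e ≤ N.cap e) ∧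
  (∀ v, v ∉ N.S → outflow N f v = inflow N f v)

/-- A (nonempty) directed walk, given as the list of its edges. -/
def IsWalk (N : FlowNet V E) (l : List E) : Prop :=
  l ≠ [] ∧ l.Chain' (fun e e' => N.dst e = N.src e')

/-- The first edge `e` of a walk dominates `f` at its start: the start vertex is
a terminal, or some outgoing edge worse than `e` carries positive flow. -/
def DomAtStart (N : FlowNet V E) (f : E → ℚ) (e : E) : Prop :=
  N.src e ∈ N.S ∨
    ∃ e', N.src e' = N.src e ∧ 0 < f e' ∧ N.rk (N.src e) e < N.rk (N.src e) e'

/-- The last edge `e` of a walk dominates `f` at its end: the end vertex is a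
terminal, or some incoming edge worse than `e` carries positive flow. -/
def DomAtEnd (N : FlowNet V E) (f : E → ℚ) (e : E) : Prop :=
  N.dst e ∈ N.S ∨
    ∃ e', N.dst e' = N.dst e ∧ 0 < f e' ∧ N.rk (N.dst e) e < N.rk (N.dst e) e'

/-- A blocking walk: a directed walk of unsaturated edges dominating `f` at both ends. -/
def IsBlockingWalk (N : FlowNet V E) (f : E → ℚ) (l : List E) : Prop :=
  IsWalk N l ∧ (∀ e ∈ l, f e < N.cap e) ∧
  ∃ h : l ≠ [], DomAtStart N f (l.head h) ∧ DomAtEnd N f (l.getLast h)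

/-- A stable flow: a feasible flow admitting no blocking walk. -/
def IsStableFlow [Fintype E] [DecidableEq V] (N : FlowNet V E) (f : E → ℚ) : Prop :=
  Feasible N f ∧ ∀ l : List E, ¬ IsBlockingWalk N f l

/-- The forced-edge construction `D_st`: delete the forced edge `e0 = uv` and
add new terminals `s = inr false` and `t = inr true`, with edges
`sv = inr false` and `ut = inr true` of capacity `cap e0`, taking over `e0`'s
rank at `v` resp. `u`. -/
def forcedNet [DecidableEq E] (N : FlowNet V E) (e0 : E) :
    FlowNet (V ⊕ Bool) ({e : E // e ≠ e0} ⊕ Bool) where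
  src x := match x with
    | Sum.inl e => Sum.inl (N.src e.1)
    | Sum.inr false => Sum.inr false          -- sv starts at the new terminal s
    | Sum.inr true => Sum.inl (N.src e0)      -- ut starts at u
  dst x := match x with
    | Sum.inl e => Sum.inl (N.dst e.1)
    | Sum.inr false => Sum.inl (N.dst e0)     -- sv ends at v
    | Sum.inr true => Sum.inr true            -- ut ends at the new terminal t
  cap x := match x with
    | Sum.inl e => N.cap e.1
    | Sum.inr _ => N.cap e0
  S := (Sum.inl '' N.S) ∪ {Sum.inr false, Sum.inr true}
  rk x y := match x, y with
    | Sum.inl v, Sum.inl e => N.rk v e.1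
    | Sum.inl v, Sum.inr _ => N.rk v e0       -- sv and ut take over e0's rank
    | Sum.inr _, _ => 0

section helper
variable [DecidableEq E] (N : FlowNet V E) (e0 : E)

@[simp] lemma fn_src_inl (e : {e : E // e ≠ e0}) : (forcedNet N e0).src (Sum.inl e) = Sum.inl (N.src e.1) := rfl
@[simp] lemma fn_src_inr_true : (forcedNet N e0).src (Sum.inr true) = Sum.inl (N.src e0) := rfl
@[simp] lemma fn_src_inr_false : (forcedNet N e0).src (Sum.inr false) = Sum.inr false := rfl
@[simp] lemma fn_dst_inl (e : {e : E // e ≠ e0}) : (forcedNet N e0).dst (Sum.inl e) = Sum.inl (N.dst e.1) := rfl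
@[simp] lemma fn_dst_inr_true : (forcedNet N e0).dst (Sum.inr true) = Sum.inr true := rfl
@[simp] lemma fn_dst_inr_false : (forcedNet N e0).dst (Sum.inr false) = Sum.inl (N.dst e0) := rfl
@[simp] lemma fn_cap_inl (e : {e : E // e ≠ e0}) : (forcedNet N e0).cap (Sum.inl e) = N.cap e.1 := rfl
@[simp] lemma fn_cap_inr (b : Bool) : (forcedNet N e0).cap (Sum.inr b) = N.cap e0 := rfl
@[simp] lemma fn_rk_inl_inl (v : V) (e : {e : E // e ≠ e0}) : (forcedNet N e0).rk (Sum.inl v) (Sum.inl e) = N.rk v e.1 := rfl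
@[simp] lemma fn_rk_inl_inr (v : V) (b : Bool) : (forcedNet N e0).rk (Sum.inl v) (Sum.inr b) = N.rk v e0 := rfl
@[simp] lemma fn_mem_S_inl (v : V) : (Sum.inl v ∈ (forcedNet N e0).S) ↔ v ∈ N.S := by
  simp [forcedNet]
@[simp] lemma fn_mem_S_inr (b : Bool) : (Sum.inr b : V ⊕ Bool) ∈ (forcedNet N e0).S := by
  cases b <;> simp [forcedNet]
end helper

section main
variable [Fintype E] [DecidableEq E] [DecidableEq V]

lemma sum_split (e0 : E) (g : E → ℚ) :
    ∑ e : E, g e = g e0 + ∑ e : {e : E // e ≠ e0}, g e.1 := by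
  rw [← Finset.add_sum_erase Finset.univ g (Finset.mem_univ e0)]
  congr 1
  rw [← Finset.sum_subtype (Finset.univ.erase e0) (fun x => by simp) g]

lemma outflow_forced (N : FlowNet V E) (e0 : E) (f' : ({e : E // e ≠ e0} ⊕ Bool) → ℚ) (v : V) :
    outflow (forcedNet N e0) f' (Sum.inl v) =
      (∑ e : {e : E // e ≠ e0}, if N.src e.1 = v then f' (Sum.inl e) else 0)
      + (if N.src e0 = v then f' (Sum.inr true) else 0) := by
  simp [outflow, Fintype.sum_sum_type]

lemma inflow_forced (N : FlowNet V E) (e0 : E) (f' : ({e : E // e ≠ e0} ⊕ Bool) → ℚ) (v : V) :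
    inflow (forcedNet N e0) f' (Sum.inl v) =
      (∑ e : {e : E // e ≠ e0}, if N.dst e.1 = v then f' (Sum.inl e) else 0)
      + (if N.dst e0 = v then f' (Sum.inr false) else 0) := by
  simp [inflow, Fintype.sum_sum_type]

lemma exists_map_inl {α β : Type*} (l : List (α ⊕ β)) (h : ∀ x ∈ l, ∃ a, x = Sum.inl a) :
    ∃ m : List α, l = m.map Sum.inl := by
  induction l with
  | nil => exact ⟨[], rfl⟩
  | cons x xs ih =>
    obtain ⟨a, ha⟩ := h x (by simp)
    obtain ⟨m, hm⟩ := ih (fun y hy => h y (by simp [hy]))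
    exact ⟨a :: m, by simp [ha, hm]⟩

end main

theorem forced_edge_flow_reduction {V E : Type}
    [Fintype E] [DecidableEq E] [DecidableEq V]
    (N : FlowNet V E) (e0 : E) :
    (∃ f : E → ℚ, IsStableFlow N f ∧ f e0 = N.cap e0) ↔
    (∃ f' : ({e : E // e ≠ e0} ⊕ Bool) → ℚ,
      IsStableFlow (forcedNet N e0) f' ∧
      f' (Sum.inr false) = N.cap e0 ∧ f' (Sum.inr true) = N.cap e0) := by
  constructor
  · rintro ⟨f, ⟨⟨hcap, hcons⟩, hstab⟩, hsat⟩
    refine ⟨Sum.elim (fun e => f e.1) (fun _ => N.cap e0), ⟨⟨?_, ?_⟩, ?_⟩, rfl, rfl⟩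
    · rintro (e | b)
      · exact hcap e.1
      · exact ⟨hsat ▸ (hcap e0).1, le_refl _⟩
    · rintro (v | b) hw
      · have hv : v ∉ N.S := by simpa using hw
        have hc := hcons v hv
        rw [outflow, sum_split e0, inflow, sum_split e0] at hc
        rw [outflow_forced, inflow_forced]
        simp only [Sum.elim_inl, Sum.elim_inr]
        rw [← hsat]
        linarith
      · exact absurd (fn_mem_S_inr N e0 b) hw
    · rintro l' ⟨⟨hne, hchain⟩, hunsat, hne2, hds, hde⟩
      obtain ⟨m, rfl⟩ := exists_map_inl l' (by
        rintro (e | b) hx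
        · exact ⟨e, rfl⟩
        · have := hunsat _ hx
          simp at this)
      have hmne : m ≠ [] := by simpa using hne
      apply hstab (m.map Subtype.val)
      have hmvne : m.map Subtype.val ≠ [] := fun h => hmne (List.map_eq_nil_iff.mp h)
      refine ⟨⟨hmvne, ?_⟩, ?_, hmvne, ?_, ?_⟩
      · rw [List.Chain', List.isChain_map]
        have := (List.isChain_map (Sum.inl : {e : E // e ≠ e0} → _)).mp hchain
        exact this.imp (fun a b hab => by simpa using hab)
      · intro e he
        obtain ⟨a, ha, rfl⟩ := List.mem_map.mp he
        have := hunsat (Sum.inl a) (List.mem_map_of_mem ha)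
        simpa using this
      · rw [List.head_map]
        have hh := hds
        rw [List.head_map] at hh
        set a := m.head (by simpa using hmne) with ha
        rcases hh with h1 | ⟨x, hx1, hx2, hx3⟩
        · exact Or.inl (by simpa using h1)
        · rcases x with e' | b
          · exact Or.inr ⟨e'.1, by simpa using hx1, by simpa using hx2, by simpa using hx3⟩
          · cases b
            · simp at hx1
            · refine Or.inr ⟨e0, by simpa using hx1, ?_, by simpa using hx3⟩
              rw [hsat]; simpa using hx2
      · rw [List.getLast_map]
        have hh := hde
        rw [List.getLast_map] at hh
        set a := m.getLast (by simpa using hmne) with ha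
        rcases hh with h1 | ⟨x, hx1, hx2, hx3⟩
        · exact Or.inl (by simpa using h1)
        · rcases x with e' | b
          · exact Or.inr ⟨e'.1, by simpa using hx1, by simpa using hx2, by simpa using hx3⟩
          · cases b
            · refine Or.inr ⟨e0, by simpa using hx1, ?_, by simpa using hx3⟩
              rw [hsat]; simpa using hx2
            · simp at hx1
  · rintro ⟨f', ⟨⟨hcap, hcons⟩, hstab⟩, hsatf, hsatt⟩
    set f : E → ℚ := fun e => if h : e = e0 then N.cap e0 else f' (Sum.inl ⟨e, h⟩) with hf
    have hf0 : f e0 = N.cap e0 := dif_pos rfl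
    have hfe : ∀ (e : E) (h : e ≠ e0), f e = f' (Sum.inl ⟨e, h⟩) := fun e h => dif_neg h
    have hfe' : ∀ e : {e : E // e ≠ e0}, f e.1 = f' (Sum.inl e) := fun e => by
      rw [hfe e.1 e.2]
    refine ⟨f, ⟨⟨?_, ?_⟩, ?_⟩, hf0⟩
    · intro e
      by_cases h : e = e0
      · subst h
        rw [hf0]
        exact ⟨hsatf ▸ (hcap (Sum.inr false)).1, le_refl _⟩
      · rw [hfe e h]
        exact hcap (Sum.inl ⟨e, h⟩)
    · intro v hv
      have hc := hcons (Sum.inl v) (by simpa using hv)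
      rw [outflow_forced, inflow_forced] at hc
      rw [outflow, sum_split e0, inflow, sum_split e0]
      have h1 : ∀ w : V, (∑ e : {e : E // e ≠ e0}, if N.src e.1 = w then f e.1 else 0)
          = ∑ e : {e : E // e ≠ e0}, if N.src e.1 = w then f' (Sum.inl e) else 0 := by
        intro w; exact Finset.sum_congr rfl (fun e _ => by rw [hfe' e])
      have h2 : ∀ w : V, (∑ e : {e : E // e ≠ e0}, if N.dst e.1 = w then f e.1 else 0)
          = ∑ e : {e : E // e ≠ e0}, if N.dst e.1 = w then f' (Sum.inl e) else 0 := by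
        intro w; exact Finset.sum_congr rfl (fun e _ => by rw [hfe' e])
      have hft : f e0 = f' (Sum.inr true) := by rw [hf0, hsatt]
      have hff : f' (Sum.inr false) = f' (Sum.inr true) := by rw [hsatf, hsatt]
      rw [h1, h2, hft]
      rw [hff] at hc
      linarith
    · rintro l ⟨⟨hne, hchain⟩, hunsat, hne2, hds, hde⟩
      have he0 : ∀ e ∈ l, e ≠ e0 := by
        intro e he h
        subst h
        exact absurd hf0 (ne_of_lt (hunsat e he))
      set g : {x // x ∈ l} → ({e : E // e ≠ e0} ⊕ Bool) :=
        fun a => Sum.inl ⟨a.1, he0 a.1 a.2⟩ with hg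
      apply hstab (l.attach.map g)
      have hane : l.attach ≠ [] := by simpa using hne
      have hmapne : l.attach.map g ≠ [] := by simpa using hane
      have hchain' : l.attach.Chain' (fun a b => N.dst a.1 = N.src b.1) :=
        by unfold List.Chain'; exact (List.isChain_map Subtype.val).mp (by rw [List.attach_map_subtype_val]; exact hchain)
      have hheadv : (l.attach.head hane).1 = l.head hne := by
        rw [List.head_attach]
      have hlastv : (l.attach.getLast hane).1 = l.getLast hne := by
        rw [List.getLast_attach]
      refine ⟨⟨hmapne, ?_⟩, ?_, hmapne, ?_, ?_⟩
      · rw [List.Chain', List.isChain_map]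
        exact hchain'.imp (fun a b hab => by simpa [hg] using hab)
      · rintro x hx
        obtain ⟨a, ha, rfl⟩ := List.mem_map.mp hx
        have := hunsat a.1 a.2
        simpa [hg, ← hfe' ⟨a.1, he0 a.1 a.2⟩] using this
      · have hhd : (l.attach.map g).head hmapne = g (l.attach.head hane) :=
          List.head_map hmapne
        rw [hhd]
        simp only [hg]
        rcases hds with h1 | ⟨e', he1, he2, he3⟩
        · exact Or.inl (by simp [hheadv, h1])
        · by_cases h : e' = e0
          · subst h
            refine Or.inr ⟨Sum.inr true, by simp [hheadv, he1], ?_, by simp [hheadv, he3]⟩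
            rw [hsatt, ← hf0]; exact he2
          · refine Or.inr ⟨Sum.inl ⟨e', h⟩, by simp [hheadv, he1], ?_, by simp [hheadv, he3]⟩
            rw [← hfe' ⟨e', h⟩]; exact he2
      · have hlst : (l.attach.map g).getLast hmapne = g (l.attach.getLast hane) :=
          List.getLast_map hmapne
        rw [hlst]
        simp only [hg]
        rcases hde with h1 | ⟨e', he1, he2, he3⟩
        · exact Or.inl (by simp [hlastv, h1])
        · by_cases h : e' = e0
          · subst h
            refine Or.inr ⟨Sum.inr false, by simp [hlastv, he1], ?_, by simp [hlastv, he3]⟩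
            rw [hsatf, ← hf0]; exact he2
          · refine Or.inr ⟨Sum.inl ⟨e', h⟩, by simp [hlastv, he1], ?_, by simp [hlastv, he3]⟩
            rw [← hfe' ⟨e', h⟩]; exact he2
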